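/- Let p ∈ L²(ℝ) and define for k ≥ 0 the functions (p * e_k), where (e_k) is an orthonormal basis of L²(ℝ). Then for any z ∈ L²(ℝ), the pointwise multiplication operator w ↦ z·w, viewed as a map from the reproducing space of the convolution, satisfies Σ_k ‖z · (p * e_k)‖²_{L²} ≤ ‖p‖²_{L²} ‖z‖²_{L²}. In particular, multiplication by z is a Hilbert–Schmidt operator from L²_Q = Q^{1/2}(L²) into L²(ℝ) with Hilbert–Schmidt norm bounded by a constant times ‖z‖_{L²}, where Q has convolution kernel q = p * p. -/

import Mathlib

open MeasureTheory
open scoped ENNReal NNReal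

lemma sq_eLpNorm_aux (f : ℝ → ℝ) (_μ : Measure ℝ) :
    (eLpNorm f 2 (volume : Measure ℝ)) ^ 2 = ∫⁻ x, (‖f x‖₊ : ℝ≥0∞) ^ 2 ∂(volume : Measure ℝ) := by
  rw [eLpNorm_eq_lintegral_rpow_enorm_toReal (by norm_num) (by norm_num)]
  rw [← ENNReal.rpow_natCast _ 2, ← ENNReal.rpow_mul]
  norm_num
  rfl

/-- For `p, z ∈ L²(ℝ)` and `(e_k)` an orthonormal (Hilbert) basis of `L²(ℝ)`, the
pointwise multiplication by `z` applied to the convolutions `p * e_k` satisfies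
`Σ_k ‖z · (p * e_k)‖²_{L²} ≤ ‖p‖²_{L²} ‖z‖²_{L²}`; in particular multiplication by `z`
is Hilbert–Schmidt from `L²_Q` (with kernel `q = p * p`) into `L²(ℝ)`. -/
theorem mul_conv_hilbertSchmidt (p z : ℝ → ℝ)
    (hp : MemLp p 2 (volume : Measure ℝ)) (hz : MemLp z 2 (volume : Measure ℝ))
    (e : HilbertBasis ℕ ℝ (Lp ℝ 2 (volume : Measure ℝ))) :
    ∑' k : ℕ,
        ((eLpNorm (fun x => z x * ∫ y, p (x - y) * (e k : ℝ → ℝ) y) 2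
          (volume : Measure ℝ)).toReal) ^ 2
      ≤ ((eLpNorm p 2 (volume : Measure ℝ)).toReal) ^ 2 *
        ((eLpNorm z 2 (volume : Measure ℝ)).toReal) ^ 2 := by
  classical
  set G : ℕ → ℝ → ℝ := fun k x => ∫ y, p (x - y) * (e k : ℝ → ℝ) y with hGdef
  set Cp : ℝ := ((eLpNorm p 2 (volume : Measure ℝ)).toReal) ^ 2 with hCp
  -- translates of p are in L²
  have hT : ∀ x : ℝ, MemLp (fun y => p (x - y)) 2 (volume : Measure ℝ) := by
    intro x
    have h := Measure.measurePreserving_sub_left (volume : Measure ℝ) x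
    exact ⟨hp.1.comp_quasiMeasurePreserving h.quasiMeasurePreserving,
      by rw [show (fun y => p (x - y)) = p ∘ (fun y => x - y) from rfl,
        eLpNorm_comp_measurePreserving hp.1 h]; exact hp.2⟩
  -- the convolution as an inner product
  have hinner : ∀ k x, G k x = @inner ℝ _ _ ((e k : Lp ℝ 2 (volume : Measure ℝ))) ((hT x).toLp _) := by
    intro k x
    rw [L2.inner_def]
    rw [show G k x = ∫ y, p (x - y) * (e k : ℝ → ℝ) y from rfl]
    refine integral_congr_ae ?_
    filter_upwards [(hT x).coeFn_toLp] with a ha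
    simp [ha, RCLike.inner_apply, mul_comm]
  -- Bessel inequality pointwise
  have hBessel : ∀ (s : Finset ℕ) (x : ℝ), ∑ k ∈ s, (G k x) ^ 2 ≤ Cp := by
    intro s x
    have hb := e.orthonormal.sum_inner_products_le (𝕜 := ℝ) ((hT x).toLp _) (s := s)
    have hnorm : ‖(hT x).toLp _‖ = (eLpNorm p 2 (volume : Measure ℝ)).toReal := by
      rw [Lp.norm_toLp]
      congr 1
      rw [show (fun y => p (x - y)) = p ∘ (fun y => x - y) from rfl,
        eLpNorm_comp_measurePreserving hp.1 (Measure.measurePreserving_sub_left (volume : Measure ℝ) x)]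
    calc ∑ k ∈ s, (G k x) ^ 2
        = ∑ k ∈ s, ‖@inner ℝ _ _ ((e k : Lp ℝ 2 (volume : Measure ℝ))) ((hT x).toLp _)‖ ^ 2 := by
          refine Finset.sum_congr rfl fun k _ => ?_
          rw [hinner k x, Real.norm_eq_abs, sq_abs]
      _ ≤ ‖(hT x).toLp _‖ ^ 2 := hb
      _ = Cp := by rw [hnorm]
  -- measurability of G k
  have hGm : ∀ k, AEStronglyMeasurable (G k) (volume : Measure ℝ) := by
    intro k
    have h1 : AEStronglyMeasurable (fun q : ℝ × ℝ => p (q.1 - q.2) * (e k : ℝ → ℝ) q.2)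
        ((volume : Measure ℝ).prod (volume : Measure ℝ)) :=
      (hp.1.comp_quasiMeasurePreserving (quasiMeasurePreserving_sub (volume : Measure ℝ) (volume : Measure ℝ))).mul
        ((Lp.aestronglyMeasurable (e k)).comp_snd)
    exact h1.integral_prod_right'
  -- lintegral quantities
  set I : ℕ → ℝ≥0∞ := fun k => ∫⁻ x, (‖z x * G k x‖₊ : ℝ≥0∞) ^ 2 ∂(volume : Measure ℝ) with hIdef
  set B : ℝ≥0∞ := ENNReal.ofReal Cp * (eLpNorm z 2 (volume : Measure ℝ)) ^ 2 with hB
  have hBne : B ≠ ∞ := by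
    refine ENNReal.mul_ne_top ENNReal.ofReal_ne_top ?_
    exact (ENNReal.pow_ne_top hz.2.ne)
  have key : ∀ s : Finset ℕ, ∑ k ∈ s, I k ≤ B := by
    intro s
    have hmeas : ∀ k ∈ s, AEMeasurable (fun x => (‖z x * G k x‖₊ : ℝ≥0∞) ^ 2) (volume : Measure ℝ) :=
      fun k _ => ((hz.1.mul (hGm k)).enorm).pow_const 2
    rw [← lintegral_finset_sum' s hmeas]
    calc ∫⁻ x, ∑ k ∈ s, (‖z x * G k x‖₊ : ℝ≥0∞) ^ 2 ∂(volume : Measure ℝ)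
        ≤ ∫⁻ x, (‖z x‖₊ : ℝ≥0∞) ^ 2 * ENNReal.ofReal Cp ∂(volume : Measure ℝ) := by
          refine lintegral_mono fun x => ?_
          have h1 : ∑ k ∈ s, (‖z x * G k x‖₊ : ℝ≥0∞) ^ 2
              = (‖z x‖₊ : ℝ≥0∞) ^ 2 * ∑ k ∈ s, (‖G k x‖₊ : ℝ≥0∞) ^ 2 := by
            rw [Finset.mul_sum]
            refine Finset.sum_congr rfl fun k _ => ?_
            rw [nnnorm_mul, ENNReal.coe_mul, mul_pow]
          rw [h1]
          refine mul_le_mul_right ?_ _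
          have h2 : ∑ k ∈ s, (‖G k x‖₊ : ℝ≥0∞) ^ 2
              = ENNReal.ofReal (∑ k ∈ s, (G k x) ^ 2) := by
            rw [ENNReal.ofReal_sum_of_nonneg (fun k _ => sq_nonneg _)]
            refine Finset.sum_congr rfl fun k _ => ?_
            rw [← enorm_eq_nnnorm, ← ofReal_norm, ← ENNReal.ofReal_pow (norm_nonneg _),
              Real.norm_eq_abs, sq_abs]
          rw [h2]
          exact ENNReal.ofReal_le_ofReal (hBessel s x)
      _ = (∫⁻ x, (‖z x‖₊ : ℝ≥0∞) ^ 2 ∂(volume : Measure ℝ)) * ENNReal.ofReal Cp :=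
          lintegral_mul_const'' _ (hz.1.enorm.pow_const 2)
      _ = B := by rw [hB, ← sq_eLpNorm_aux _ volume, mul_comm]
  -- conclude
  have hIk_ne : ∀ (s : Finset ℕ), ∀ k ∈ s, I k ≠ ∞ := by
    intro s k hk
    refine ne_top_of_le_ne_top hBne ?_
    exact le_trans (Finset.single_le_sum (fun j _ => zero_le) hk) (key s)
  refine tsum_le_of_sum_le' (by positivity) (fun s => ?_)
  have hsummand : ∀ k, ((eLpNorm (fun x => z x * G k x) 2 (volume : Measure ℝ)).toReal) ^ 2 = (I k).toReal := by
    intro k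
    rw [← ENNReal.toReal_pow, sq_eLpNorm_aux _ volume]
  calc ∑ k ∈ s, ((eLpNorm (fun x => z x * G k x) 2 (volume : Measure ℝ)).toReal) ^ 2
      = ∑ k ∈ s, (I k).toReal := Finset.sum_congr rfl fun k _ => hsummand k
    _ = (∑ k ∈ s, I k).toReal := (ENNReal.toReal_sum (hIk_ne s)).symm
    _ ≤ B.toReal := ENNReal.toReal_mono hBne (key s)
    _ = Cp * ((eLpNorm z 2 (volume : Measure ℝ)).toReal) ^ 2 := by
        rw [hB, ENNReal.toReal_mul, ENNReal.toReal_pow,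
          ENNReal.toReal_ofReal (by positivity)]
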